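/- arXiv:math/0303071 — 2 statements merged into one kernel-verified Lean document; each statement's English description precedes it below -/
import Mathlib

section
/- For every integer n ≥ 1 and every real x ∈ [0,1]: Σ_{m=0}^{n-1} C(n,m) x^m (1-x)^{n-m} s_{n-m} = s_n - Σ_{j=1}^n (x^j/j)·(h_n - h_{j-1}). -/
/-- The `n`-th harmonic number `h_n = ∑_{j=1}^n 1/j`, with `h_0 = 0`. -/
noncomputable def harmonic' (n : ℕ) : ℝ := ∑ j ∈ Finset.Icc 1 n, (1 : ℝ) / j

/-- `s_n = ∑_{1 ≤ i ≤ j ≤ n} 1/(i·j)`, with `s_0 = 0`. -/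
noncomputable def s (n : ℕ) : ℝ :=
  ∑ j ∈ Finset.Icc 1 n, ∑ i ∈ Finset.Icc 1 j, 1 / ((i : ℝ) * j)

lemma harmonic'_succ (n : ℕ) : harmonic' (n+1) = harmonic' n + 1/(n+1) := by
  unfold harmonic'
  rw [Finset.sum_Icc_succ_top (by omega : 1 ≤ n+1)]
  push_cast
  ring

lemma s_succ (n : ℕ) : s (n+1) = s n + harmonic' (n+1) / (n+1) := by
  unfold s
  rw [Finset.sum_Icc_succ_top (by omega : 1 ≤ n+1)]
  congr 1
  rw [harmonic', Finset.sum_div]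
  apply Finset.sum_congr rfl
  intro i _
  push_cast
  rw [div_div]

lemma step (f : ℕ → ℝ) (x : ℝ) (n : ℕ) :
    ∑ m ∈ Finset.range (n+1+1), ((n+1).choose m : ℝ) * x^m * (1-x)^(n+1-m) * f (n+1-m)
      = ∑ m ∈ Finset.range (n+1), (n.choose m : ℝ) * x^m * (1-x)^(n-m) * f (n-m)
        + (1-x) * ∑ m ∈ Finset.range (n+1),
            (n.choose m : ℝ) * x^m * (1-x)^(n-m) * (f (n+1-m) - f (n-m)) := by
  -- normalize f (n+1-m) to f ((n-m)+1) on the RHS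
  have hR : ∑ m ∈ Finset.range (n+1),
        (n.choose m : ℝ) * x^m * (1-x)^(n-m) * (f (n+1-m) - f (n-m))
      = ∑ m ∈ Finset.range (n+1),
        (n.choose m : ℝ) * x^m * (1-x)^(n-m) * (f ((n-m)+1) - f (n-m)) := by
    apply Finset.sum_congr rfl
    intro m hm
    have : n+1-m = (n-m)+1 := by
      have := Finset.mem_range.mp hm; omega
    rw [this]
  rw [hR]
  rw [Finset.sum_range_succ']
  have h1 : ∀ i ∈ Finset.range (n+1),
      ((n+1).choose (i+1) : ℝ) * x^(i+1) * (1-x)^(n+1-(i+1)) * f (n+1-(i+1))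
      = (n.choose i : ℝ) * x^(i+1) * (1-x)^(n-i) * f (n-i)
        + (n.choose (i+1) : ℝ) * x^(i+1) * (1-x)^(n-i) * f (n-i) := by
    intro i _
    rw [Nat.succ_sub_succ, Nat.choose_succ_succ]
    push_cast; ring
  rw [Finset.sum_congr rfl h1, Finset.sum_add_distrib]
  -- second piece plus the m=0 term equals U
  have hU : ∑ i ∈ Finset.range (n+1), (n.choose (i+1) : ℝ) * x^(i+1) * (1-x)^(n-i) * f (n-i)
        + ((n+1).choose 0 : ℝ) * x^0 * (1-x)^(n+1-0) * f (n+1-0)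
      = ∑ m ∈ Finset.range (n+1),
          (n.choose m : ℝ) * x^m * (1-x)^((n-m)+1) * f ((n-m)+1) := by
    rw [Finset.sum_range_succ]
    simp only [Nat.choose_succ_self, Nat.cast_zero, zero_mul, add_zero]
    rw [Finset.sum_range_succ' (fun m => (n.choose m : ℝ) * x^m * (1-x)^((n-m)+1) * f ((n-m)+1))]
    congr 1
    · apply Finset.sum_congr rfl
      intro i hi
      have : n - (i+1) + 1 = n - i := by
        have := Finset.mem_range.mp hi; omega
      rw [this]
    · simp
  rw [add_assoc, hU, Finset.mul_sum, ← Finset.sum_add_distrib, ← Finset.sum_add_distrib]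
  apply Finset.sum_congr rfl
  intro m _
  ring

lemma binom_one (x : ℝ) (n : ℕ) :
    ∑ m ∈ Finset.range (n+1), (n.choose m : ℝ) * x^m * (1-x)^(n-m) = 1 := by
  have := add_pow x (1-x) n
  simp only [add_sub_cancel, one_pow] at this
  conv_rhs => rw [this]
  apply Finset.sum_congr rfl
  intro m _
  ring

lemma absorb (n m : ℕ) (hm : m ≤ n) :
    (n+1-m) * (n+1).choose m = (n+1) * n.choose m := by
  have h1 := Nat.add_one_mul_choose_eq n (n-m)
  rw [Nat.choose_symm hm] at h1
  have h2 : n - m + 1 = n + 1 - m := by omega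
  have h3 : (n+1).choose (n-m+1) = (n+1).choose m := by
    rw [h2]
    exact Nat.choose_symm_of_eq_add (by omega)
  rw [← h3, ← h2]
  simpa [Nat.succ_eq_add_one, mul_comm] using h1.symm

lemma key (x : ℝ) (n : ℕ) :
    (1-x) * ∑ m ∈ Finset.range (n+1),
        (n.choose m : ℝ) * x^m * (1-x)^(n-m) * (1/((n+1-m : ℕ) : ℝ))
      = (1/(n+1 : ℝ)) * ∑ m ∈ Finset.range (n+1),
        ((n+1).choose m : ℝ) * x^m * (1-x)^(n+1-m) := by
  rw [Finset.mul_sum, Finset.mul_sum]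
  apply Finset.sum_congr rfl
  intro m hm
  have hm' : m ≤ n := by have := Finset.mem_range.mp hm; omega
  have habR : ((n+1-m : ℕ) : ℝ) * ((n+1).choose m : ℝ) = ((n+1 : ℕ) : ℝ) * (n.choose m : ℝ) := by
    exact_mod_cast absorb n m hm'
  have h1 : ((n+1-m : ℕ) : ℝ) ≠ 0 := by
    have : 0 < n+1-m := by omega
    positivity
  have h2 : ((n+1 : ℕ) : ℝ) ≠ 0 := by positivity
  have hdiv : (n.choose m : ℝ) / ((n+1-m : ℕ) : ℝ) = ((n+1).choose m : ℝ) / ((n+1 : ℕ) : ℝ) := by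
    rw [div_eq_div_iff h1 h2]
    linear_combination -habR
  calc (1-x) * ((n.choose m : ℝ) * x^m * (1-x)^(n-m) * (1/((n+1-m : ℕ) : ℝ)))
      = ((n.choose m : ℝ) / ((n+1-m : ℕ) : ℝ)) * (x^m * ((1-x)^(n-m) * (1-x))) := by
        ring
    _ = (((n+1).choose m : ℝ) / ((n+1 : ℕ) : ℝ)) * (x^m * ((1-x)^(n-m) * (1-x))) := by rw [hdiv]
    _ = (1/(n+1 : ℝ)) * (((n+1).choose m : ℝ) * x^m * (1-x)^(n+1-m)) := by
        rw [show n+1-m = (n-m)+1 from by omega, pow_succ]; push_cast; ring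

lemma L1 (x : ℝ) (n : ℕ) :
    ∑ m ∈ Finset.range (n+1), (n.choose m : ℝ) * x^m * (1-x)^(n-m) * harmonic' (n-m)
      = harmonic' n - ∑ j ∈ Finset.Icc 1 n, x^j / j := by
  induction n with
  | zero => simp [harmonic']
  | succ n ih =>
    rw [step harmonic' x n, ih]
    have hE : ∑ m ∈ Finset.range (n+1),
          (n.choose m : ℝ) * x^m * (1-x)^(n-m) * (harmonic' (n+1-m) - harmonic' (n-m))
        = ∑ m ∈ Finset.range (n+1),
          (n.choose m : ℝ) * x^m * (1-x)^(n-m) * (1/((n+1-m : ℕ) : ℝ)) := by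
      apply Finset.sum_congr rfl
      intro m hm
      have hm' : m ≤ n := by have := Finset.mem_range.mp hm; omega
      rw [show n+1-m = (n-m)+1 from by omega, harmonic'_succ]
      push_cast
      ring
    rw [hE, key]
    have hB : ∑ m ∈ Finset.range (n+1), ((n+1).choose m : ℝ) * x^m * (1-x)^(n+1-m)
        = 1 - x^(n+1) := by
      have h := binom_one x (n+1)
      rw [Finset.sum_range_succ] at h
      simp only [Nat.choose_self, Nat.cast_one, one_mul, Nat.sub_self, pow_zero, mul_one] at h
      linarith
    rw [hB, harmonic'_succ, Finset.sum_Icc_succ_top (by omega : 1 ≤ n+1)]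
    push_cast
    ring

lemma key2 (x : ℝ) (n : ℕ) :
    (1-x) * ∑ m ∈ Finset.range (n+1),
        (n.choose m : ℝ) * x^m * (1-x)^(n-m) * (1/((n+1-m : ℕ) : ℝ)) * harmonic' (n+1-m)
      = (1/(n+1 : ℝ)) * ∑ m ∈ Finset.range (n+1),
        ((n+1).choose m : ℝ) * x^m * (1-x)^(n+1-m) * harmonic' (n+1-m) := by
  rw [Finset.mul_sum, Finset.mul_sum]
  apply Finset.sum_congr rfl
  intro m hm
  have hm' : m ≤ n := by have := Finset.mem_range.mp hm; omega
  have habR : ((n+1-m : ℕ) : ℝ) * ((n+1).choose m : ℝ) = ((n+1 : ℕ) : ℝ) * (n.choose m : ℝ) := by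
    exact_mod_cast absorb n m hm'
  have h1 : ((n+1-m : ℕ) : ℝ) ≠ 0 := by
    have : 0 < n+1-m := by omega
    positivity
  have h2 : ((n+1 : ℕ) : ℝ) ≠ 0 := by positivity
  have hdiv : (n.choose m : ℝ) / ((n+1-m : ℕ) : ℝ) = ((n+1).choose m : ℝ) / ((n+1 : ℕ) : ℝ) := by
    rw [div_eq_div_iff h1 h2]
    linear_combination -habR
  calc (1-x) * ((n.choose m : ℝ) * x^m * (1-x)^(n-m) * (1/((n+1-m : ℕ) : ℝ)) * harmonic' (n+1-m))
      = ((n.choose m : ℝ) / ((n+1-m : ℕ) : ℝ)) * (x^m * ((1-x)^(n-m) * (1-x)) * harmonic' (n+1-m)) := by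
        ring
    _ = (((n+1).choose m : ℝ) / ((n+1 : ℕ) : ℝ)) * (x^m * ((1-x)^(n-m) * (1-x)) * harmonic' (n+1-m)) := by
        rw [hdiv]
    _ = (1/(n+1 : ℝ)) * (((n+1).choose m : ℝ) * x^m * (1-x)^(n+1-m) * harmonic' (n+1-m)) := by
        rw [show n+1-m = (n-m)+1 from by omega, pow_succ]; push_cast; ring

lemma L2 (x : ℝ) (n : ℕ) :
    ∑ m ∈ Finset.range (n+1), (n.choose m : ℝ) * x^m * (1-x)^(n-m) * s (n-m)
      = s n - ∑ j ∈ Finset.Icc 1 n, x^j / j * (harmonic' n - harmonic' (j-1)) := by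
  induction n with
  | zero => simp [s]
  | succ n ih =>
    rw [step s x n, ih]
    have hE : ∑ m ∈ Finset.range (n+1),
          (n.choose m : ℝ) * x^m * (1-x)^(n-m) * (s (n+1-m) - s (n-m))
        = ∑ m ∈ Finset.range (n+1),
          (n.choose m : ℝ) * x^m * (1-x)^(n-m) * (1/((n+1-m : ℕ) : ℝ)) * harmonic' (n+1-m) := by
      apply Finset.sum_congr rfl
      intro m hm
      have hm' : m ≤ n := by have := Finset.mem_range.mp hm; omega
      rw [show n+1-m = (n-m)+1 from by omega, s_succ]
      push_cast
      ring
    rw [hE, key2]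
    have hL1 : ∑ m ∈ Finset.range (n+1),
          ((n+1).choose m : ℝ) * x^m * (1-x)^(n+1-m) * harmonic' (n+1-m)
        = harmonic' (n+1) - ∑ j ∈ Finset.Icc 1 (n+1), x^j / j := by
      have h := L1 x (n+1)
      rw [Finset.sum_range_succ] at h
      simpa [harmonic'] using h
    rw [hL1]
    have hsplit : ∑ j ∈ Finset.Icc 1 (n+1), x^j/(j : ℝ) * (harmonic' (n+1) - harmonic' (j-1))
        = ∑ j ∈ Finset.Icc 1 n, x^j/(j : ℝ) * (harmonic' n - harmonic' (j-1))
          + (1/(n+1 : ℝ)) * ∑ j ∈ Finset.Icc 1 n, x^j/(j : ℝ)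
          + x^(n+1)/(n+1 : ℝ) * (harmonic' (n+1) - harmonic' n) := by
      rw [Finset.sum_Icc_succ_top (by omega : 1 ≤ n+1)]
      simp only [Nat.add_sub_cancel]
      rw [Finset.mul_sum, ← Finset.sum_add_distrib]
      congr 1
      · apply Finset.sum_congr rfl
        intro j _
        rw [harmonic'_succ]
        push_cast
        ring
      · push_cast
        ring
    rw [hsplit, s_succ, harmonic'_succ, Finset.sum_Icc_succ_top (by omega : 1 ≤ n+1)]
    push_cast
    ring

/-- Summation formula: for every `n ≥ 1` and `x ∈ [0,1]`,
`∑_{m=0}^{n-1} C(n,m) x^m (1-x)^{n-m} s_{n-m} = s_n - ∑_{j=1}^n (x^j/j)(h_n - h_{j-1})`. -/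
theorem stmt11 (n : ℕ) (hn : 1 ≤ n) (x : ℝ) (hx : x ∈ Set.Icc (0 : ℝ) 1) :
    ∑ m ∈ Finset.range n, (n.choose m : ℝ) * x ^ m * (1 - x) ^ (n - m) * s (n - m)
      = s n - ∑ j ∈ Finset.Icc 1 n, x ^ j / j * (harmonic' n - harmonic' (j - 1)) := by
  have h := L2 x n
  rw [Finset.sum_range_succ] at h
  simpa [s] using h
end

section
/- Let ω be a probability measure on (0,1) with ν = ∫₀¹ (log(1-x))² ω(dx) < ∞, and let B_n(x) = Σ_{m=1}^{n-1} C(n,m) x^m (1-x)^{n-m} (log(1 - m/n))² be the Bernstein polynomial of degree n for (log(1-x))². Then lim_{n→∞} ∫₀¹ |B_n(x) - (log(1-x))²| ω(dx) = 0. -/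
open MeasureTheory Filter Topology

open Finset

noncomputable def bp (n m : ℕ) (x : ℝ) : ℝ := (n.choose m : ℝ) * x ^ m * (1 - x) ^ (n - m)

lemma bp_nonneg {n m : ℕ} {x : ℝ} (h0 : 0 ≤ x) (h1 : x ≤ 1) : 0 ≤ bp n m x := by
  unfold bp
  have h2 : (0:ℝ) ≤ 1 - x := by linarith
  positivity

lemma bp_sum (n : ℕ) (x : ℝ) : ∑ m ∈ range (n+1), bp n m x = 1 := by
  have := add_pow x (1-x) n
  simp only [add_sub_cancel, one_pow] at this
  rw [show ∑ m ∈ range (n+1), bp n m x = ∑ m ∈ range (n+1), x ^ m * (1-x) ^ (n-m) * (n.choose m : ℝ) by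
    apply Finset.sum_congr rfl; intro m _; unfold bp; ring]
  rw [← this]

lemma bp_var (n : ℕ) (x : ℝ) : ∑ m ∈ range (n+1), ((n:ℝ)*x - m)^2 * bp n m x = n * x * (1-x) := by
  have h := congrArg (Polynomial.eval x) (bernsteinPolynomial.variance (R := ℝ) n)
  simp only [Polynomial.eval_finset_sum, Polynomial.eval_mul, Polynomial.eval_pow,
    Polynomial.eval_sub, Polynomial.eval_smul, Polynomial.eval_X, Polynomial.eval_natCast,
    Polynomial.eval_one, bernsteinPolynomial, Polynomial.eval_natCast, nsmul_eq_mul] at h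
  rw [← h]
  apply Finset.sum_congr rfl; intro m _; unfold bp; ring

-- Chebyshev-type bound
lemma bp_cheby (n : ℕ) (x : ℝ) (h0 : 0 ≤ x) (h1 : x ≤ 1) (c : ℝ) (hc : 0 < c)
    (s : Finset ℕ) (hs : s ⊆ range (n+1)) (hmem : ∀ m ∈ s, c ≤ ((n:ℝ)*x - m)^2) :
    ∑ m ∈ s, bp n m x ≤ n * x * (1-x) / c := by
  rw [le_div_iff₀ hc]
  have key : (∑ m ∈ s, bp n m x) * c ≤ ∑ m ∈ s, ((n:ℝ)*x - m)^2 * bp n m x := by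
    rw [Finset.sum_mul]
    apply Finset.sum_le_sum
    intro m hm
    have := bp_nonneg (n := n) (m := m) h0 h1
    have := hmem m hm
    nlinarith
  refine key.trans ?_
  rw [← bp_var n x]
  apply Finset.sum_le_sum_of_subset_of_nonneg hs
  intro m _ _
  have := bp_nonneg (n := n) (m := m) h0 h1
  positivity

lemma bp_chernoff (n : ℕ) (x : ℝ) (h0 : 0 ≤ x) (h1 : x ≤ 1) :
    ∑ m ∈ (range (n+1)).filter (fun (m:ℕ) => ((n:ℝ) - (m:ℝ)) ≤ (n:ℝ)*(1-x)/2), bp n m x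
      ≤ Real.exp (-((n:ℝ)*(1-x))/8) := by
  set q : ℝ := 1 - x with hq
  have hq0 : 0 ≤ q := by linarith
  have hx0 : 0 ≤ x := h0
  -- step 1: each term bounded by 2^(nq/2) * C(n,m) x^m (q/2)^(n-m)
  have step1 : ∀ m ∈ (range (n+1)).filter (fun (m:ℕ) => ((n:ℝ) - (m:ℝ)) ≤ (n:ℝ)*q/2),
      bp n m x ≤ Real.exp ((n:ℝ)*q/2 * Real.log 2) * ((n.choose m : ℝ) * x^m * (q/2)^(n-m)) := by
    intro m hm
    rw [mem_filter, mem_range] at hm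
    obtain ⟨hm1, hm2⟩ := hm
    have hmn : m ≤ n := Nat.lt_succ_iff.mp hm1
    have hnm : ((n - m : ℕ) : ℝ) = (n:ℝ) - m := by
      push_cast [Nat.cast_sub hmn]; ring
    have key : q ^ (n - m) ≤ Real.exp ((n:ℝ)*q/2 * Real.log 2) * (q/2)^(n-m) := by
      have h2 : (q/2)^(n-m) * 2^(n-m) = q ^ (n-m) := by
        rw [← mul_pow]; ring_nf
      have h3 : (2:ℝ)^(n-m) ≤ Real.exp ((n:ℝ)*q/2 * Real.log 2) := by
        have he : Real.exp (((n-m : ℕ):ℝ) * Real.log 2) = (2:ℝ)^(n-m) := by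
          rw [Real.exp_nat_mul, Real.exp_log (by norm_num : (0:ℝ) < 2)]
        rw [← he]
        apply Real.exp_le_exp.mpr
        apply mul_le_mul_of_nonneg_right _ (Real.log_nonneg (by norm_num))
        rw [hnm]; linarith
      calc q ^ (n-m) = (q/2)^(n-m) * 2^(n-m) := h2.symm
        _ ≤ (q/2)^(n-m) * Real.exp ((n:ℝ)*q/2 * Real.log 2) := by
            apply mul_le_mul_of_nonneg_left h3 (by positivity)
        _ = Real.exp ((n:ℝ)*q/2 * Real.log 2) * (q/2)^(n-m) := by ring
    calc bp n m x = (n.choose m : ℝ) * x^m * q^(n-m) := rfl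
      _ ≤ (n.choose m : ℝ) * x^m * (Real.exp ((n:ℝ)*q/2 * Real.log 2) * (q/2)^(n-m)) := by
          apply mul_le_mul_of_nonneg_left key (by positivity)
      _ = Real.exp ((n:ℝ)*q/2 * Real.log 2) * ((n.choose m : ℝ) * x^m * (q/2)^(n-m)) := by ring
  have step2 : ∑ m ∈ (range (n+1)).filter (fun (m:ℕ) => ((n:ℝ) - (m:ℝ)) ≤ (n:ℝ)*q/2), bp n m x
      ≤ Real.exp ((n:ℝ)*q/2 * Real.log 2) * (x + q/2)^n := by
    calc ∑ m ∈ (range (n+1)).filter (fun (m:ℕ) => ((n:ℝ) - (m:ℝ)) ≤ (n:ℝ)*q/2), bp n m x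
        ≤ ∑ m ∈ (range (n+1)).filter (fun (m:ℕ) => ((n:ℝ) - (m:ℝ)) ≤ (n:ℝ)*q/2),
            Real.exp ((n:ℝ)*q/2 * Real.log 2) * ((n.choose m : ℝ) * x^m * (q/2)^(n-m)) :=
          Finset.sum_le_sum step1
      _ ≤ ∑ m ∈ range (n+1),
            Real.exp ((n:ℝ)*q/2 * Real.log 2) * ((n.choose m : ℝ) * x^m * (q/2)^(n-m)) := by
          apply Finset.sum_le_sum_of_subset_of_nonneg (filter_subset _ _)
          intro m _ _; positivity
      _ = Real.exp ((n:ℝ)*q/2 * Real.log 2) * ∑ m ∈ range (n+1), x^m * (q/2)^(n-m) * (n.choose m : ℝ) := by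
          rw [Finset.mul_sum]; apply Finset.sum_congr rfl; intro m _; ring
      _ = Real.exp ((n:ℝ)*q/2 * Real.log 2) * (x + q/2)^n := by rw [← add_pow]
  refine step2.trans ?_
  have h4 : (x + q/2)^n ≤ Real.exp (-(n:ℝ)*q/2) := by
    have h5 : x + q/2 = 1 - q/2 := by rw [hq]; ring
    have h6 : (1 : ℝ) - q/2 ≤ Real.exp (-(q/2)) := by
      have := Real.add_one_le_exp (-(q/2)); linarith
    have h7 : (0:ℝ) ≤ 1 - q/2 := by rw [hq]; linarith
    calc (x + q/2)^n = (1 - q/2)^n := by rw [h5]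
      _ ≤ (Real.exp (-(q/2)))^n := pow_le_pow_left₀ h7 h6 n
      _ = Real.exp ((n:ℕ) * -(q/2)) := by rw [← Real.exp_nat_mul]
      _ = Real.exp (-(n:ℝ)*q/2) := by push_cast; ring_nf
  calc Real.exp ((n:ℝ)*q/2 * Real.log 2) * (x + q/2)^n
      ≤ Real.exp ((n:ℝ)*q/2 * Real.log 2) * Real.exp (-(n:ℝ)*q/2) := by
        apply mul_le_mul_of_nonneg_left h4 (Real.exp_nonneg _)
    _ = Real.exp ((n:ℝ)*q/2 * Real.log 2 + -(n:ℝ)*q/2) := by rw [← Real.exp_add]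
    _ ≤ Real.exp (-((n:ℝ)*q)/8) := by
        apply Real.exp_le_exp.mpr
        have hl : Real.log 2 < 0.6931471808 := Real.log_two_lt_d9
        have hnq : 0 ≤ (n:ℝ)*q := by positivity
        nlinarith [mul_le_mul_of_nonneg_left hl.le hnq]

lemma log_term_bounds {n m : ℕ} (h1 : 1 ≤ m) (h2 : m ≤ n - 1) :
    (1:ℝ)/n ≤ 1 - (m:ℝ)/n ∧ 1 - (m:ℝ)/n ≤ 1 ∧ (Real.log (1 - (m:ℝ)/n))^2 ≤ (Real.log n)^2 := by
  have hn : 2 ≤ n := by omega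
  have hn0 : (0:ℝ) < n := by positivity
  have hmn : (m:ℝ) + 1 ≤ n := by exact_mod_cast (by omega : m + 1 ≤ n)
  have hm0 : (0:ℝ) ≤ m := Nat.cast_nonneg m
  have hlow : (1:ℝ)/n ≤ 1 - (m:ℝ)/n := by
    rw [div_le_iff₀ hn0] at *
    have : ((1:ℝ) - (m:ℝ)/n) * n = n - m := by field_simp
    rw [this]; linarith
  have hhigh : 1 - (m:ℝ)/n ≤ 1 := by
    have : (0:ℝ) ≤ (m:ℝ)/n := by positivity
    linarith
  refine ⟨hlow, hhigh, ?_⟩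
  have hy0 : (0:ℝ) < 1 - (m:ℝ)/n := lt_of_lt_of_le (by positivity) hlow
  have hlog1 : Real.log (1 - (m:ℝ)/n) ≤ 0 := Real.log_nonpos (le_of_lt hy0) hhigh
  have hlog2 : -Real.log n ≤ Real.log (1 - (m:ℝ)/n) := by
    have := Real.log_le_log (by positivity : (0:ℝ) < 1/n) hlow
    rwa [one_div, Real.log_inv] at this
  have hlogn : 0 ≤ Real.log n := Real.log_nonneg (by exact_mod_cast hn.trans' (by norm_num))
  exact sq_le_sq' hlog2 (hlog1.trans hlogn)

set_option maxHeartbeats 1000000 in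
lemma bernstein_dom (n : ℕ) {x : ℝ} (hx : x ∈ Set.Ioo (0:ℝ) 1) :
    (∑ m ∈ Finset.Icc 1 (n - 1),
      (n.choose m : ℝ) * x ^ m * (1 - x) ^ (n - m) * (Real.log (1 - (m : ℝ) / n)) ^ 2)
      ≤ 5 * (Real.log (1 - x))^2 + 100 := by
  obtain ⟨hx0, hx1⟩ := hx
  set q : ℝ := 1 - x with hqdef
  have hq0 : 0 < q := by simp [hqdef]; linarith
  have hq1 : q < 1 := by simp [hqdef]; linarith
  set f : ℝ := (Real.log q)^2 with hfdef
  have hf0 : 0 ≤ f := sq_nonneg _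
  -- rewrite terms as bp * v
  have hterm : ∀ m, (n.choose m : ℝ) * x ^ m * (1 - x) ^ (n - m) * (Real.log (1 - (m : ℝ) / n)) ^ 2
      = bp n m x * (Real.log (1 - (m : ℝ) / n)) ^ 2 := fun m => rfl
  have hsub : Finset.Icc 1 (n-1) ⊆ range (n+1) := by
    intro m hm; rw [mem_Icc] at hm; rw [mem_range]; omega
  set P : ℕ → Prop := fun m => (n:ℝ)*q/2 ≤ (n:ℝ) - m with hPdef
  have hPd : DecidablePred P := fun m => Real.decidableLE _ _
  rw [← Finset.sum_filter_add_sum_filter_not (Finset.Icc 1 (n-1)) P]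
  have hbpnn : ∀ m : ℕ, 0 ≤ bp n m x := fun m => bp_nonneg (le_of_lt hx0) (le_of_lt hx1)
  -- good part
  have hgood : ∑ m ∈ (Finset.Icc 1 (n-1)).filter P,
      (n.choose m : ℝ) * x ^ m * (1 - x) ^ (n - m) * (Real.log (1 - (m : ℝ) / n)) ^ 2
      ≤ 2 * f + 1 := by
    have hlq2 : (Real.log (q/2))^2 ≤ 2 * f + 1 := by
      have h2 : Real.log (q/2) = Real.log q - Real.log 2 := by
        rw [Real.log_div (ne_of_gt hq0) (by norm_num)]
      have hl2 : 0 < Real.log 2 := Real.log_pos (by norm_num)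
      have hl2' : Real.log 2 < 0.6931471808 := Real.log_two_lt_d9
      rw [h2, hfdef]; nlinarith [sq_nonneg (Real.log q + Real.log 2)]
    calc ∑ m ∈ (Finset.Icc 1 (n-1)).filter P,
          (n.choose m : ℝ) * x ^ m * (1 - x) ^ (n - m) * (Real.log (1 - (m : ℝ) / n)) ^ 2
        ≤ ∑ m ∈ (Finset.Icc 1 (n-1)).filter P, bp n m x * (Real.log (q/2))^2 := by
          apply Finset.sum_le_sum
          intro m hm
          rw [mem_filter, mem_Icc] at hm
          obtain ⟨⟨hm1, hm2⟩, hmP⟩ := hm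
          rw [hterm m]
          apply mul_le_mul_of_nonneg_left _ (hbpnn m)
          -- (log(1-m/n))² ≤ (log(q/2))²
          obtain ⟨hlo, hhi, _⟩ := log_term_bounds hm1 hm2
          have hn0 : (0:ℝ) < n := by
            have : 2 ≤ n := by omega
            positivity
          have hq2le : q/2 ≤ 1 - (m:ℝ)/n := by
            rw [hPdef] at hmP
            have : 1 - (m:ℝ)/n = ((n:ℝ) - m)/n := by field_simp
            rw [this, le_div_iff₀ hn0]
            calc q/2 * n = (n:ℝ)*q/2 := by ring
              _ ≤ (n:ℝ) - m := hmP
          have hy0 : (0:ℝ) < q/2 := by positivity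
          have hlog1 : Real.log (1 - (m:ℝ)/n) ≤ 0 := Real.log_nonpos (by linarith) hhi
          have hlog2 : Real.log (q/2) ≤ Real.log (1 - (m:ℝ)/n) := Real.log_le_log hy0 hq2le
          have hlogq2 : Real.log (q/2) ≤ 0 := Real.log_nonpos (le_of_lt hy0) (by linarith)
          nlinarith
      _ = (Real.log (q/2))^2 * ∑ m ∈ (Finset.Icc 1 (n-1)).filter P, bp n m x := by
          rw [Finset.mul_sum]; apply Finset.sum_congr rfl; intros; ring
      _ ≤ (Real.log (q/2))^2 * 1 := by
          apply mul_le_mul_of_nonneg_left _ (sq_nonneg _)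
          rw [← bp_sum n x]
          apply Finset.sum_le_sum_of_subset_of_nonneg ((filter_subset _ _).trans hsub)
          intro m _ _; exact hbpnn m
      _ ≤ 2 * f + 1 := by rw [mul_one]; exact hlq2
  -- bad part
  have hbad : ∑ m ∈ (Finset.Icc 1 (n-1)).filter (fun m => ¬ P m),
      (n.choose m : ℝ) * x ^ m * (1 - x) ^ (n - m) * (Real.log (1 - (m : ℝ) / n)) ^ 2
      ≤ 2 * f + 64 := by
    by_cases hbig : 2 ≤ (n:ℝ)*q
    · -- bound terms by (log n)^2 * bp, then Chernoff
      have hstep : ∑ m ∈ (Finset.Icc 1 (n-1)).filter (fun m => ¬ P m),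
          (n.choose m : ℝ) * x ^ m * (1 - x) ^ (n - m) * (Real.log (1 - (m : ℝ) / n)) ^ 2
          ≤ (Real.log n)^2 * Real.exp (-((n:ℝ)*q)/8) := by
        calc ∑ m ∈ (Finset.Icc 1 (n-1)).filter (fun m => ¬ P m),
              (n.choose m : ℝ) * x ^ m * (1 - x) ^ (n - m) * (Real.log (1 - (m : ℝ) / n)) ^ 2
            ≤ ∑ m ∈ (Finset.Icc 1 (n-1)).filter (fun m => ¬ P m), bp n m x * (Real.log n)^2 := by
              apply Finset.sum_le_sum
              intro m hm
              rw [mem_filter, mem_Icc] at hm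
              obtain ⟨⟨hm1, hm2⟩, _⟩ := hm
              rw [hterm m]
              exact mul_le_mul_of_nonneg_left (log_term_bounds hm1 hm2).2.2 (hbpnn m)
          _ = (Real.log n)^2 * ∑ m ∈ (Finset.Icc 1 (n-1)).filter (fun m => ¬ P m), bp n m x := by
              rw [Finset.mul_sum]; apply Finset.sum_congr rfl; intros; ring
          _ ≤ (Real.log n)^2 * Real.exp (-((n:ℝ)*q)/8) := by
              apply mul_le_mul_of_nonneg_left _ (sq_nonneg _)
              refine le_trans ?_ (bp_chernoff n x (le_of_lt hx0) (le_of_lt hx1))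
              apply Finset.sum_le_sum_of_subset_of_nonneg
              · intro m hm
                rw [mem_filter] at hm ⊢
                obtain ⟨hmIcc, hmP⟩ := hm
                refine ⟨hsub hmIcc, ?_⟩
                simp only [hPdef, not_le] at hmP
                exact hmP.le
              · intro m _ _; exact hbpnn m
      refine hstep.trans ?_
      -- now (log n)^2 exp(-t/8) ≤ 2f + 64 where t = nq ≥ 2
      set t : ℝ := (n:ℝ)*q with htdef
      have ht2 : (2:ℝ) ≤ t := hbig
      have ht0 : (0:ℝ) < t := by linarith
      have hn0 : (0:ℝ) < n := by
        rcases Nat.eq_zero_or_pos n with h | h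
        · exfalso; rw [htdef, h] at ht0; simp at ht0
        · exact_mod_cast h
      have hlogn : Real.log n = Real.log t - Real.log q := by
        rw [htdef, Real.log_mul (ne_of_gt hn0) (ne_of_gt hq0)]; ring
      have hlt4 : (Real.log t)^2 ≤ 4 * t := by
        have hst : Real.sqrt t ^ 2 = t := Real.sq_sqrt (le_of_lt ht0)
        have hsp : 0 < Real.sqrt t := Real.sqrt_pos.mpr ht0
        have hs1 : 1 ≤ Real.sqrt t := by
          rw [show (1:ℝ) = Real.sqrt 1 by simp]
          exact Real.sqrt_le_sqrt (by linarith)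
        have hls : Real.log t = 2 * Real.log (Real.sqrt t) := by
          conv_lhs => rw [← hst, Real.log_pow]
          norm_num
        have h1 : Real.log (Real.sqrt t) ≤ Real.sqrt t - 1 := Real.log_le_sub_one_of_pos hsp
        have h2 : 0 ≤ Real.log (Real.sqrt t) := Real.log_nonneg hs1
        nlinarith
      have hE1 : Real.exp (-t/8) ≤ 1 := Real.exp_le_one_iff.mpr (by linarith)
      have hE0 : 0 ≤ Real.exp (-t/8) := Real.exp_nonneg _
      have htE : t * Real.exp (-t/8) ≤ 8 := by
        have hEX : Real.exp (-t/8) * Real.exp (t/8) = 1 := by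
          rw [← Real.exp_add, show -t/8 + t/8 = 0 by ring, Real.exp_zero]
        have h3 := mul_le_mul_of_nonneg_left (Real.add_one_le_exp (t/8)) hE0
        nlinarith [hEX, hE0, ht2]
      have hfq : (Real.log n)^2 ≤ 2*(Real.log t)^2 + 2*f := by
        rw [hlogn, hfdef]; nlinarith [sq_nonneg (Real.log t + Real.log q)]
      calc (Real.log n)^2 * Real.exp (-t/8)
          ≤ (2*(Real.log t)^2 + 2*f) * Real.exp (-t/8) := by
            apply mul_le_mul_of_nonneg_right hfq hE0
        _ = 2*(Real.log t)^2 * Real.exp (-t/8) + 2*f*Real.exp (-t/8) := by ring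
        _ ≤ 2*(4*t) * Real.exp (-t/8) + 2*f*1 := by
            have h5 := mul_le_mul_of_nonneg_right hlt4 hE0
            have h6 := mul_le_mul_of_nonneg_left hE1 (by linarith : (0:ℝ) ≤ 2*f)
            linarith
        _ = 8*(t * Real.exp (-t/8)) + 2*f := by ring
        _ ≤ 8*8 + 2*f := by linarith [htE]
        _ = 2*f + 64 := by ring
    · -- bad set is empty
      have hempty : (Finset.Icc 1 (n-1)).filter (fun m => ¬ P m) = ∅ := by
        rw [Finset.filter_eq_empty_iff]
        intro m hm
        rw [mem_Icc] at hm
        obtain ⟨hm1, hm2⟩ := hm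
        simp only [hPdef, not_not]
        have hmn : (m:ℝ) + 1 ≤ n := by exact_mod_cast (by omega : m + 1 ≤ n)
        push_neg at hbig
        simp only [hqdef] at hbig ⊢
        linarith
      rw [hempty, Finset.sum_empty]
      linarith
  linarith

lemma aux_tendsto (c d : ℝ) (hd : 0 < d) :
    Tendsto (fun n : ℕ => ((Real.log n)^2 + c) / ((n:ℝ) * d)) atTop (𝓝 0) := by
  have h1 : Tendsto (fun y : ℝ => (Real.log y)^2 / (1 * y + 0)) atTop (𝓝 0) :=
    Real.tendsto_pow_log_div_mul_add_atTop 1 0 2 one_ne_zero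
  have h1' : Tendsto (fun n : ℕ => (Real.log n)^2 / (n:ℝ)) atTop (𝓝 0) := by
    have := h1.comp (tendsto_natCast_atTop_atTop (R := ℝ))
    simpa [Function.comp_def] using this
  have h2 : Tendsto (fun n : ℕ => c * ((n:ℝ))⁻¹) atTop (𝓝 (c * 0)) :=
    (tendsto_inv_atTop_zero.comp (tendsto_natCast_atTop_atTop (R := ℝ))).const_mul c
  have h3 : Tendsto (fun n : ℕ => ((Real.log n)^2 / (n:ℝ) + c * ((n:ℝ))⁻¹) * d⁻¹) atTop
      (𝓝 ((0 + c * 0) * d⁻¹)) := ((h1'.add h2)).mul_const _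
  have h4 : ((0:ℝ) + c * 0) * d⁻¹ = 0 := by ring
  rw [h4] at h3
  apply h3.congr'
  filter_upwards [eventually_gt_atTop 0] with n hn
  have hn0 : (0:ℝ) < n := by exact_mod_cast hn
  field_simp

set_option maxHeartbeats 1000000 in
lemma bernstein_ptwise {x : ℝ} (hx : x ∈ Set.Ioo (0:ℝ) 1) :
    Filter.Tendsto (fun n : ℕ => ∑ m ∈ Finset.Icc 1 (n - 1),
      (n.choose m : ℝ) * x ^ m * (1 - x) ^ (n - m) * (Real.log (1 - (m : ℝ) / n)) ^ 2)
      Filter.atTop (𝓝 ((Real.log (1 - x))^2)) := by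
  obtain ⟨hx0, hx1⟩ := hx
  have hbpnn : ∀ n m : ℕ, 0 ≤ bp n m x := fun n m => bp_nonneg (le_of_lt hx0) (le_of_lt hx1)
  set fx : ℝ := (Real.log (1 - x))^2 with hfxdef
  have hfx0 : 0 ≤ fx := sq_nonneg _
  rw [Metric.tendsto_atTop]
  intro ε hε
  -- continuity at x
  have hcont : ContinuousAt (fun t : ℝ => (Real.log (1 - t))^2) x := by
    have h1 : (1:ℝ) - x ≠ 0 := by linarith
    exact ((Real.continuousAt_log h1).comp
      ((continuous_const.sub continuous_id).continuousAt)).pow 2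
  rw [Metric.continuousAt_iff] at hcont
  obtain ⟨δ₀, hδ₀pos, hδ₀⟩ := hcont (ε/2) (by linarith)
  set δ : ℝ := min δ₀ (min x (1-x)) with hδdef
  have hδpos : 0 < δ := by
    apply lt_min hδ₀pos; apply lt_min hx0; linarith
  have hδx : δ ≤ x := le_trans (min_le_right _ _) (min_le_left _ _)
  have hδ1x : δ ≤ 1 - x := le_trans (min_le_right _ _) (min_le_right _ _)
  have hδδ0 : δ ≤ δ₀ := min_le_left _ _
  -- tail bound sequence
  have hg := aux_tendsto fx (δ^2) (by positivity)
  rw [Metric.tendsto_atTop] at hg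
  obtain ⟨N₁, hN₁⟩ := hg (ε/2) (by linarith)
  refine ⟨max N₁ 1, fun n hn => ?_⟩
  have hN : N₁ ≤ n := le_trans (le_max_left _ _) hn
  have hn1 : 1 ≤ n := le_trans (le_max_right _ _) hn
  have hn0 : (0:ℝ) < n := by exact_mod_cast hn1
  have hgn : ((Real.log n)^2 + fx) / ((n:ℝ) * δ^2) < ε/2 := by
    have := hN₁ n hN
    rw [Real.dist_eq, sub_zero] at this
    exact lt_of_abs_lt this
  -- rewrite the Bernstein sum over range (n+1)
  classical
  set F : ℕ → ℝ := fun m => if 1 ≤ m ∧ m ≤ n - 1 then (Real.log (1 - (m:ℝ)/n))^2 else 0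
    with hFdef
  have hF0 : ∀ m, 0 ≤ F m := by
    intro m; rw [hFdef]; dsimp only; split
    · exact sq_nonneg _
    · exact le_refl 0
  have hFbound : ∀ m, F m ≤ (Real.log n)^2 := by
    intro m; rw [hFdef]; dsimp only; split
    · next h => exact (log_term_bounds h.1 h.2).2.2
    · exact sq_nonneg _
  have hsub : Finset.Icc 1 (n-1) ⊆ range (n+1) := by
    intro m hm; rw [mem_Icc] at hm; rw [mem_range]; omega
  have hBF : (∑ m ∈ Finset.Icc 1 (n - 1),
      (n.choose m : ℝ) * x ^ m * (1 - x) ^ (n - m) * (Real.log (1 - (m : ℝ) / n)) ^ 2)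
      = ∑ m ∈ range (n+1), bp n m x * F m := by
    rw [← Finset.sum_subset hsub (fun m _ hm => ?_)]
    · apply Finset.sum_congr rfl
      intro m hm
      rw [mem_Icc] at hm
      rw [hFdef]; dsimp only; rw [if_pos hm]; rfl
    · rw [mem_Icc] at hm
      rw [hFdef]; dsimp only; rw [if_neg hm, mul_zero]
  rw [hBF, Real.dist_eq]
  have hsum1 : ∑ m ∈ range (n+1), bp n m x = 1 := bp_sum n x
  have hdiff : (∑ m ∈ range (n+1), bp n m x * F m) - fx
      = ∑ m ∈ range (n+1), bp n m x * (F m - fx) := by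
    rw [show ∑ m ∈ range (n+1), bp n m x * (F m - fx)
        = ∑ m ∈ range (n+1), (bp n m x * F m - bp n m x * fx) from
      Finset.sum_congr rfl (fun m _ => by ring), Finset.sum_sub_distrib, ← Finset.sum_mul,
      hsum1, one_mul]
  rw [hdiff]
  have habs : |∑ m ∈ range (n+1), bp n m x * (F m - fx)|
      ≤ ∑ m ∈ range (n+1), bp n m x * |F m - fx| := by
    refine (Finset.abs_sum_le_sum_abs _ _).trans ?_
    apply Finset.sum_le_sum
    intro m _
    rw [abs_mul, abs_of_nonneg (hbpnn n m)]
  refine lt_of_le_of_lt habs ?_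
  -- split into near and far
  set Near : ℕ → Prop := fun m => |(m:ℝ)/n - x| < δ with hNdef
  rw [← Finset.sum_filter_add_sum_filter_not (range (n+1)) Near]
  have hnear : ∑ m ∈ (range (n+1)).filter Near, bp n m x * |F m - fx| ≤ ε/2 := by
    calc ∑ m ∈ (range (n+1)).filter Near, bp n m x * |F m - fx|
        ≤ ∑ m ∈ (range (n+1)).filter Near, bp n m x * (ε/2) := by
          apply Finset.sum_le_sum
          intro m hm
          rw [mem_filter, mem_range] at hm
          obtain ⟨hmr, hmN⟩ := hm
          apply mul_le_mul_of_nonneg_left _ (hbpnn n m)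
          -- m is in Icc 1 (n-1)
          have hm1 : 1 ≤ m := by
            by_contra h
            push_neg at h
            interval_cases m
            rw [hNdef] at hmN
            simp only [Nat.cast_zero, zero_div, zero_sub, abs_neg, abs_of_pos hx0] at hmN
            linarith
          have hm2 : m ≤ n - 1 := by
            rcases Nat.lt_or_ge m n with h | h
            · omega
            · exfalso
              have hmn : m = n := by omega
              rw [hNdef, hmn] at hmN
              rw [div_self (ne_of_gt hn0)] at hmN
              rw [abs_of_pos (by linarith : (0:ℝ) < 1 - x)] at hmN
              linarith
          have hFm : F m = (Real.log (1 - (m:ℝ)/n))^2 := by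
            rw [hFdef]; dsimp only; rw [if_pos ⟨hm1, hm2⟩]
          rw [hFm]
          have hdist : dist ((m:ℝ)/n) x < δ₀ := by
            rw [Real.dist_eq]
            exact lt_of_lt_of_le hmN hδδ0
          have := hδ₀ hdist
          rw [Real.dist_eq] at this
          exact le_of_lt this
      _ = (ε/2) * ∑ m ∈ (range (n+1)).filter Near, bp n m x := by
          rw [Finset.mul_sum]; apply Finset.sum_congr rfl; intros; ring
      _ ≤ (ε/2) * 1 := by
          apply mul_le_mul_of_nonneg_left _ (by linarith)
          rw [← hsum1]
          apply Finset.sum_le_sum_of_subset_of_nonneg (filter_subset _ _)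
          intro m _ _; exact hbpnn n m
      _ = ε/2 := mul_one _
  have hfar : ∑ m ∈ (range (n+1)).filter (fun m => ¬ Near m), bp n m x * |F m - fx|
      < ε/2 := by
    have hc : (0:ℝ) < ((n:ℝ)*δ)^2 := by positivity
    have hcheb : ∑ m ∈ (range (n+1)).filter (fun m => ¬ Near m), bp n m x
        ≤ (n:ℝ) * x * (1-x) / ((n:ℝ)*δ)^2 := by
      apply bp_cheby n x (le_of_lt hx0) (le_of_lt hx1) _ hc _ (filter_subset _ _)
      intro m hm
      rw [mem_filter] at hm
      obtain ⟨_, hmN⟩ := hm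
      simp only [hNdef, not_lt] at hmN
      have h1 : (n:ℝ)*δ ≤ |(n:ℝ)*x - m| := by
        have : (n:ℝ)*x - m = -((n:ℝ) * ((m:ℝ)/n - x)) := by field_simp; ring
        rw [this, abs_neg, abs_mul, abs_of_pos hn0]
        exact mul_le_mul_of_nonneg_left hmN (le_of_lt hn0)
      calc ((n:ℝ)*δ)^2 ≤ |(n:ℝ)*x - m|^2 := by
            apply pow_le_pow_left₀ (by positivity) h1
        _ = ((n:ℝ)*x - m)^2 := sq_abs _
    calc ∑ m ∈ (range (n+1)).filter (fun m => ¬ Near m), bp n m x * |F m - fx|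
        ≤ ∑ m ∈ (range (n+1)).filter (fun m => ¬ Near m),
            bp n m x * ((Real.log n)^2 + fx) := by
          apply Finset.sum_le_sum
          intro m _
          apply mul_le_mul_of_nonneg_left _ (hbpnn n m)
          rw [abs_le]
          constructor
          · have := hF0 m; nlinarith [sq_nonneg (Real.log n)]
          · have := hFbound m; linarith
      _ = ((Real.log n)^2 + fx) * ∑ m ∈ (range (n+1)).filter (fun m => ¬ Near m), bp n m x := by
          rw [Finset.mul_sum]; apply Finset.sum_congr rfl; intros; ring
      _ ≤ ((Real.log n)^2 + fx) * ((n:ℝ) * x * (1-x) / ((n:ℝ)*δ)^2) := by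
          apply mul_le_mul_of_nonneg_left hcheb
          have : 0 ≤ (Real.log n)^2 := sq_nonneg _
          linarith
      _ ≤ ((Real.log n)^2 + fx) * (1 / ((n:ℝ) * δ^2)) := by
          have h7 : (n:ℝ)*x*(1-x)/((n:ℝ)*δ)^2 = x*(1-x)/((n:ℝ)*δ^2) := by
            field_simp
          have h8 : x*(1-x)/((n:ℝ)*δ^2) ≤ 1/((n:ℝ)*δ^2) := by
            gcongr
            nlinarith
          rw [h7]
          apply mul_le_mul_of_nonneg_left h8
          nlinarith [sq_nonneg (Real.log n)]
      _ = ((Real.log n)^2 + fx) / ((n:ℝ) * δ^2) := by ring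
      _ < ε/2 := hgn
  linarith

/-- The Bernstein polynomial of degree `n` for `(log (1-x))²`:
`B_n(x) = ∑_{m=1}^{n-1} C(n,m) x^m (1-x)^{n-m} (log(1 - m/n))²`. -/
noncomputable def bernsteinLogSq (n : ℕ) (x : ℝ) : ℝ :=
  ∑ m ∈ Finset.Icc 1 (n - 1),
    (n.choose m : ℝ) * x ^ m * (1 - x) ^ (n - m) * (Real.log (1 - (m : ℝ) / n)) ^ 2

/-- If `ω` is a probability measure on `(0,1)` with `ν = ∫ (log(1-x))² ω(dx) < ∞`, then the
Bernstein polynomials of `(log(1-x))²` converge to it in `L¹(ω)`. -/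
theorem stmt12 (ω : Measure ℝ) [IsProbabilityMeasure ω]
    (hsupp : ω ((Set.Ioo (0 : ℝ) 1)ᶜ) = 0)
    (hν : Integrable (fun x => (Real.log (1 - x)) ^ 2) ω) :
    Tendsto (fun n : ℕ => ∫ x, |bernsteinLogSq n x - (Real.log (1 - x)) ^ 2| ∂ω) atTop (𝓝 0) := by
  have hae : ∀ᵐ x ∂ω, x ∈ Set.Ioo (0:ℝ) 1 := by
    rw [MeasureTheory.ae_iff]
    exact hsupp
  have hmf : Measurable (fun x : ℝ => (Real.log (1 - x))^2) :=
    (Real.measurable_log.comp (measurable_const.sub measurable_id)).pow_const 2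
  have hmB : ∀ n, Measurable (bernsteinLogSq n) := by
    intro n
    unfold bernsteinLogSq
    apply Finset.measurable_sum
    intro m _
    exact ((measurable_const.mul (measurable_id.pow_const m)).mul
      ((measurable_const.sub measurable_id).pow_const (n-m))).mul measurable_const
  have hBnn : ∀ n : ℕ, ∀ x ∈ Set.Ioo (0:ℝ) 1, 0 ≤ bernsteinLogSq n x := by
    intro n x hx
    unfold bernsteinLogSq
    apply Finset.sum_nonneg
    intro m _
    have h1 : (0:ℝ) ≤ x := le_of_lt hx.1
    have h2 : (0:ℝ) ≤ 1 - x := by have := hx.2; linarith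
    positivity
  have key := MeasureTheory.tendsto_integral_of_dominated_convergence
    (μ := ω) (F := fun n x => |bernsteinLogSq n x - (Real.log (1 - x)) ^ 2|)
    (f := fun _ => (0:ℝ)) (bound := fun x => 5*(Real.log (1-x))^2 + 100)
    (fun n => (((hmB n).sub hmf).abs).aestronglyMeasurable)
    ((hν.const_mul 5).add (MeasureTheory.integrable_const 100))
    (fun n => by
      filter_upwards [hae] with x hx
      have h1 : bernsteinLogSq n x ≤ 5*(Real.log (1-x))^2 + 100 := bernstein_dom n hx
      have h2 : 0 ≤ bernsteinLogSq n x := hBnn n x hx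
      have h3 : 0 ≤ (Real.log (1-x))^2 := sq_nonneg _
      rw [Real.norm_eq_abs, abs_abs, abs_le]
      constructor <;> nlinarith)
    (by
      filter_upwards [hae] with x hx
      have h := ((bernstein_ptwise hx).sub_const ((Real.log (1-x))^2)).abs
      rw [sub_self, abs_zero] at h
      exact h)
  simpa using key
end
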